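/- Let a be a directed edge of a !-tensor expression G with ectx_G(a)=[E1,...,En] and nctx_G(a)=[N1,...,Nm], and write B' for fr(B). Then: Drop_{Ei} leaves a with edge context [E1,...,E(i-1),E(i+1),...,En] and unchanged node context; Drop_{Ni} leaves a with unchanged edge context and node context [N1,...,N(i-1),N(i+1),...,Nm]; Exp_{Ei,fr} gives the fresh copy fr(a) edge context [E1',...,E(i-1)',E(i+1),...,En] and unchanged node context; Exp_{Ni,fr} gives fr(a) edge context [E1',...,En'] and node context [N1',...,N(i-1)',N(i+1),...,Nm]; Copy_{Ei,fr} gives fr(a) edge context [E1',...,Ei',E(i+1),...,En]; Copy_{Ni,fr} gives fr(a) edge context [E1',...,En'] and node context [N1',...,Ni',N(i+1),...,Nm]; and any edge remaining after a Kill operation has unchanged contexts. In all cases, edges of G surviving the operation unchanged retain their original contexts. -/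

import Mathlib

/-!
Shared infrastructure for !-tensor expressions (Kissinger & Quick,
"Tensors, !-graphs, and non-commutative quantum structures").
-/

namespace BangTensor

/-- Edge names. -/
abbrev EdgeName : Type := ℕ
/-- !-box names (a set disjoint from edge names; modelled as a separate sort). -/
abbrev BoxName : Type := ℕ

/-- Directed edges: an output `â` or an input `ǎ`. -/
inductive DirEdge : Type
  | out (a : EdgeName)
  | inp (a : EdgeName)
  deriving DecidableEq

namespace DirEdge

def name : DirEdge → EdgeName
  | out a => a
  | inp a => a

def partner : DirEdge → DirEdge
  | out a => inp a
  | inp a => out a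

def rename (f : EdgeName → EdgeName) : DirEdge → DirEdge
  | out a => out (f a)
  | inp a => inp (f a)

end DirEdge

/-- A freshness function: a pair of bijections on edge names and !-box names. -/
structure Freshness : Type where
  em : EdgeName ≃ EdgeName
  bm : BoxName ≃ BoxName

/-- Edgeterms: built from the empty edgeterm, directed edges, clockwise
and anticlockwise edge groups, and concatenation. -/
inductive EdgeTerm : Type
  | eps
  | edge (d : DirEdge)
  | cw (e : EdgeTerm) (A : BoxName)
  | acw (e : EdgeTerm) (A : BoxName)
  | cat (e f : EdgeTerm)
  deriving DecidableEq

namespace EdgeTerm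

/-- Number of occurrences of a directed edge in an edgeterm. -/
def count (d : DirEdge) : EdgeTerm → ℕ
  | eps => 0
  | edge d' => if d' = d then 1 else 0
  | cw e _ => e.count d
  | acw e _ => e.count d
  | cat e f => e.count d + f.count d

/-- Edge context of a directed edge inside an edgeterm: the list of !-boxes
(edge groups) containing it, inside-out. -/
def ectx (d : DirEdge) : EdgeTerm → Option (List BoxName)
  | eps => none
  | edge d' => if d' = d then some [] else none
  | cw e A => (e.ectx d).map (· ++ [A])
  | acw e A => (e.ectx d).map (· ++ [A])
  | cat e f => (e.ectx d).orElse (fun _ => f.ectx d)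

def edgeNames : EdgeTerm → Set EdgeName
  | eps => ∅
  | edge d => {d.name}
  | cw e _ => e.edgeNames
  | acw e _ => e.edgeNames
  | cat e f => e.edgeNames ∪ f.edgeNames

def boxNames : EdgeTerm → Set BoxName
  | eps => ∅
  | edge _ => ∅
  | cw e A => insert A e.boxNames
  | acw e A => insert A e.boxNames
  | cat e f => e.boxNames ∪ f.boxNames

def rename (f : EdgeName → EdgeName) (g : BoxName → BoxName) : EdgeTerm → EdgeTerm
  | eps => eps
  | edge d => edge (d.rename f)
  | cw e A => cw (e.rename f g) (g A)
  | acw e A => acw (e.rename f g) (g A)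
  | cat e f' => cat (e.rename f g) (f'.rename f g)

/-- Rename the output edge `b̂` to `ĉ`. -/
def renameOut (b c : EdgeName) : EdgeTerm → EdgeTerm
  | eps => eps
  | edge (.out a) => edge (.out (if a = b then c else a))
  | edge (.inp a) => edge (.inp a)
  | cw e A => cw (e.renameOut b c) A
  | acw e A => acw (e.renameOut b c) A
  | cat e f => cat (e.renameOut b c) (f.renameOut b c)

/-- Rename the input edge `b̌` to `č`. -/
def renameInp (b c : EdgeName) : EdgeTerm → EdgeTerm
  | eps => eps
  | edge (.out a) => edge (.out a)
  | edge (.inp a) => edge (.inp (if a = b then c else a))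
  | cw e A => cw (e.renameInp b c) A
  | acw e A => acw (e.renameInp b c) A
  | cat e f => cat (e.renameInp b c) (f.renameInp b c)

/-- The operation `Kill_A` on edgeterms. -/
def kill (A : BoxName) : EdgeTerm → EdgeTerm
  | eps => eps
  | edge d => edge d
  | cw e B => if B = A then eps else cw (e.kill A) B
  | acw e B => if B = A then eps else acw (e.kill A) B
  | cat e f => cat (e.kill A) (f.kill A)

/-- The operation `Drop_A` on edgeterms. -/
def drop (A : BoxName) : EdgeTerm → EdgeTerm
  | eps => eps
  | edge d => edge d
  | cw e B => if B = A then e else cw (e.drop A) B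
  | acw e B => if B = A then e else acw (e.drop A) B
  | cat e f => cat (e.drop A) (f.drop A)

/-- The operation `Exp_{A,fr}` on edgeterms. -/
def exp (A : BoxName) (fr : Freshness) : EdgeTerm → EdgeTerm
  | eps => eps
  | edge d => edge d
  | cw e B => if B = A then cat (cw e B) (e.rename fr.em fr.bm) else cw (e.exp A fr) B
  | acw e B => if B = A then cat (e.rename fr.em fr.bm) (acw e B) else acw (e.exp A fr) B
  | cat e f => cat (e.exp A fr) (f.exp A fr)

/-- The operation `Copy_{A,fr}` on edgeterms. -/
def copy (A : BoxName) (fr : Freshness) : EdgeTerm → EdgeTerm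
  | eps => eps
  | edge d => edge d
  | cw e B =>
      if B = A then cat (cw e B) (cw (e.rename fr.em fr.bm) (fr.bm A)) else cw (e.copy A fr) B
  | acw e B =>
      if B = A then cat (acw (e.rename fr.em fr.bm) (fr.bm A)) (acw e B) else acw (e.copy A fr) B
  | cat e f => cat (e.copy A fr) (f.copy A fr)

/-- An edgeterm with no edge groups (a concrete edgeterm). -/
def noGroups : EdgeTerm → Prop
  | eps => True
  | edge _ => True
  | cw _ _ => False
  | acw _ _ => False
  | cat e f => e.noGroups ∧ f.noGroups

/-- Equivalence of edgeterms: associativity and unit laws for concatenation,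
and removal of empty edge groups; closed under congruence. -/
inductive Equiv : EdgeTerm → EdgeTerm → Prop
  | refl (e) : Equiv e e
  | symm {e f} : Equiv e f → Equiv f e
  | trans {e f g} : Equiv e f → Equiv f g → Equiv e g
  | cat_congr {e e' f f'} : Equiv e e' → Equiv f f' → Equiv (cat e f) (cat e' f')
  | cw_congr {e e'} (A) : Equiv e e' → Equiv (cw e A) (cw e' A)
  | acw_congr {e e'} (A) : Equiv e e' → Equiv (acw e A) (acw e' A)
  | assoc (e f g) : Equiv (cat (cat e f) g) (cat e (cat f g))
  | unit_left (e) : Equiv (cat eps e) e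
  | unit_right (e) : Equiv (cat e eps) e
  | cw_eps (A) : Equiv (cw eps A) eps
  | acw_eps (A) : Equiv (acw eps A) eps

end EdgeTerm

/-- !-pretensor expressions over a signature `σ`. -/
inductive Pretensor (σ : Type) : Type
  | unit
  | idt (a b : EdgeName)
  | gen (φ : σ) (e : EdgeTerm)
  | box (G : Pretensor σ) (A : BoxName)
  | prod (G H : Pretensor σ)

namespace Pretensor

variable {σ : Type}

def edgeCount (d : DirEdge) : Pretensor σ → ℕ
  | unit => 0
  | idt a b => (if d = DirEdge.out a then 1 else 0) + (if d = DirEdge.inp b then 1 else 0)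
  | gen _ e => e.count d
  | box G _ => G.edgeCount d
  | prod G H => G.edgeCount d + H.edgeCount d

def boxCount (A : BoxName) : Pretensor σ → ℕ
  | unit => 0
  | idt _ _ => 0
  | gen _ _ => 0
  | box G B => (if B = A then 1 else 0) + G.boxCount A
  | prod G H => G.boxCount A + H.boxCount A

/-- The pair (edge context, node context) of a directed edge, if it occurs. -/
def ctx2 (d : DirEdge) : Pretensor σ → Option (List BoxName × List BoxName)
  | unit => none
  | idt a b => if d = DirEdge.out a ∨ d = DirEdge.inp b then some ([], []) else none
  | gen _ e => (e.ectx d).map (fun l => (l, []))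
  | box G A => (G.ctx2 d).map (fun p => (p.1, p.2 ++ [A]))
  | prod G H => (G.ctx2 d).orElse (fun _ => H.ctx2 d)

/-- The edge context of a directed edge. -/
def ectxOf (G : Pretensor σ) (d : DirEdge) : Option (List BoxName) := (G.ctx2 d).map (·.1)

/-- The node context of a directed edge. -/
def nctxOf (G : Pretensor σ) (d : DirEdge) : Option (List BoxName) := (G.ctx2 d).map (·.2)

/-- The (total) context of a directed edge: edge context followed by node context. -/
def ctxOf (G : Pretensor σ) (d : DirEdge) : Option (List BoxName) :=
  (G.ctx2 d).map (fun p => p.1 ++ p.2)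

/-- The list of !-boxes enclosing the !-box `A`, inside-out, if `A` occurs. -/
def boxCtx (A : BoxName) : Pretensor σ → Option (List BoxName)
  | unit => none
  | idt _ _ => none
  | gen _ _ => none
  | box G B => if B = A then some [] else (G.boxCtx A).map (· ++ [B])
  | prod G H => (G.boxCtx A).orElse (fun _ => H.boxCtx A)

/-- `A ≺_G B`: the !-box `A` is nested immediately inside the !-box `B` in `G`. -/
def Prec (G : Pretensor σ) (A B : BoxName) : Prop := ∃ l, G.boxCtx A = some (B :: l)

/-- `A` is nested (possibly not immediately) inside `B` in `G`. -/
def nestedIn (G : Pretensor σ) (A B : BoxName) : Prop := Relation.TransGen G.Prec A B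

/-- `A` is a top-level !-box of `G` (it occurs and has no parent !-box). -/
def topLevel (G : Pretensor σ) (A : BoxName) : Prop := G.boxCtx A = some []

def edgeNames : Pretensor σ → Set EdgeName
  | unit => ∅
  | idt a b => {a, b}
  | gen _ e => e.edgeNames
  | box G _ => G.edgeNames
  | prod G H => G.edgeNames ∪ H.edgeNames

def boxNames : Pretensor σ → Set BoxName
  | unit => ∅
  | idt _ _ => ∅
  | gen _ e => e.boxNames
  | box G A => insert A G.boxNames
  | prod G H => G.boxNames ∪ H.boxNames

/-- The directed edge `d` occurs in `G`. -/
def occursDir (G : Pretensor σ) (d : DirEdge) : Prop := G.edgeCount d ≠ 0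

/-- The directed edge `d` is free in `G` (it occurs and its partner does not). -/
def freeDir (G : Pretensor σ) (d : DirEdge) : Prop := G.occursDir d ∧ ¬ G.occursDir d.partner

/-- The edge name `a` is free in `G`: exactly one of `â`, `ǎ` occurs in `G`. -/
def freeName (G : Pretensor σ) (a : EdgeName) : Prop :=
  Xor' (G.occursDir (DirEdge.out a)) (G.occursDir (DirEdge.inp a))

/-- A !-tensor expression: a !-pretensor expression satisfying the freshness
conditions F1, F2 and the context conditions C1, C2, C3. -/
def IsTensorExpr (G : Pretensor σ) : Prop :=
  -- F1: each of `â` and `ǎ` occurs at most once per edge name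
  (∀ d : DirEdge, G.edgeCount d ≤ 1) ∧
  -- F2: each !-box name has at most one occurrence of `[...]_A`
  (∀ A : BoxName, G.boxCount A ≤ 1) ∧
  -- C1: edge context and node context are disjoint
  (∀ (d : DirEdge) (ec nc : List BoxName), G.ctx2 d = some (ec, nc) → ec.Disjoint nc) ∧
  -- C2: edge contexts consist of !-boxes of G, consecutively immediately nested
  (∀ (d : DirEdge) (ec nc : List BoxName), G.ctx2 d = some (ec, nc) →
    (∀ B ∈ ec, G.boxCount B ≠ 0) ∧ List.Chain' G.Prec ec) ∧
  -- C3: coherence for bound pairs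
  (∀ (a : EdgeName) (eo no ei ni : List BoxName),
    G.ctx2 (DirEdge.out a) = some (eo, no) → G.ctx2 (DirEdge.inp a) = some (ei, ni) →
    ∃ es bs : List BoxName, es ++ ni = eo ++ bs ∧ es ++ no = ei ++ bs)

/-- Apply renamings of edge names and box names throughout a !-pretensor expression. -/
def rename (f : EdgeName → EdgeName) (g : BoxName → BoxName) : Pretensor σ → Pretensor σ
  | unit => unit
  | idt a b => idt (f a) (f b)
  | gen φ e => gen φ (e.rename f g)
  | box G A => box (G.rename f g) (g A)
  | prod G H => prod (G.rename f g) (H.rename f g)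

/-- Rename the output edge `b̂` to `ĉ`. -/
def renameOut (b c : EdgeName) : Pretensor σ → Pretensor σ
  | unit => unit
  | idt a y => idt (if a = b then c else a) y
  | gen φ e => gen φ (e.renameOut b c)
  | box G A => box (G.renameOut b c) A
  | prod G H => prod (G.renameOut b c) (H.renameOut b c)

/-- Rename the input edge `b̌` to `č`. -/
def renameInp (b c : EdgeName) : Pretensor σ → Pretensor σ
  | unit => unit
  | idt a y => idt a (if y = b then c else y)
  | gen φ e => gen φ (e.renameInp b c)
  | box G A => box (G.renameInp b c) A
  | prod G H => prod (G.renameInp b c) (H.renameInp b c)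

/-- Rename the edge name `a` (in both directions) to `c`. -/
def renameEdgeName (a c : EdgeName) (G : Pretensor σ) : Pretensor σ :=
  G.rename (fun x => if x = a then c else x) id

/-- Rename the !-box name `A` to `B`. -/
def renameBoxName (A B : BoxName) (G : Pretensor σ) : Pretensor σ :=
  G.rename id (fun X => if X = A then B else X)

/-- The !-box operation `Kill_A`. -/
def kill (A : BoxName) : Pretensor σ → Pretensor σ
  | unit => unit
  | idt a b => idt a b
  | gen φ e => gen φ (e.kill A)
  | box G B => if B = A then unit else box (G.kill A) B
  | prod G H => prod (G.kill A) (H.kill A)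

/-- The !-box operation `Drop_A`. -/
def drop (A : BoxName) : Pretensor σ → Pretensor σ
  | unit => unit
  | idt a b => idt a b
  | gen φ e => gen φ (e.drop A)
  | box G B => if B = A then G else box (G.drop A) B
  | prod G H => prod (G.drop A) (H.drop A)

/-- The !-box operation `Exp_{A,fr}`. -/
def exp (A : BoxName) (fr : Freshness) : Pretensor σ → Pretensor σ
  | unit => unit
  | idt a b => idt a b
  | gen φ e => gen φ (e.exp A fr)
  | box G B => if B = A then prod (box G B) (G.rename fr.em fr.bm) else box (G.exp A fr) B
  | prod G H => prod (G.exp A fr) (H.exp A fr)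

/-- The !-box operation `Copy_{A,fr}`. -/
def copy (A : BoxName) (fr : Freshness) : Pretensor σ → Pretensor σ
  | unit => unit
  | idt a b => idt a b
  | gen φ e => gen φ (e.copy A fr)
  | box G B =>
      if B = A then prod (box G B) (box (G.rename fr.em fr.bm) (fr.bm A))
      else box (G.copy A fr) B
  | prod G H => prod (G.copy A fr) (H.copy A fr)

/-- Weakening `Wk_A^K`: add `K` inside the !-box `A`. -/
def wk (A : BoxName) (K : Pretensor σ) : Pretensor σ → Pretensor σ
  | box G B => if B = A then box (prod G K) B else box (wk A K G) B
  | prod G H => prod (wk A K G) (wk A K H)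
  | G => G

/-- A concrete tensor expression: no !-boxes and no edge groups. -/
def IsConcrete : Pretensor σ → Prop
  | unit => True
  | idt _ _ => True
  | gen _ e => e.noGroups
  | box _ _ => False
  | prod G H => G.IsConcrete ∧ H.IsConcrete

/-- Nesting of !-boxes: `nest [(K₁,B₁),…,(Kₙ,Bₙ)] X = [Kₙ ⋯ [K₁ ⬝ X]_{B₁} ⋯]_{Bₙ}`. -/
def nest : List (Pretensor σ × BoxName) → Pretensor σ → Pretensor σ
  | [], X => X
  | p :: rest, X => nest rest (box (prod p.1 X) p.2)

/-- Equivalence of !-tensor expressions: associativity, commutativity and unit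
laws for product, edgeterm equivalences, renaming of bound edge names to fresh
names, and the identity-contraction laws. -/
inductive Equiv : Pretensor σ → Pretensor σ → Prop
  | refl (G) : Equiv G G
  | symm {G H} : Equiv G H → Equiv H G
  | trans {G H K} : Equiv G H → Equiv H K → Equiv G K
  | prod_congr {G G' H H'} : Equiv G G' → Equiv H H' → Equiv (prod G H) (prod G' H')
  | box_congr {G G'} (A) : Equiv G G' → Equiv (box G A) (box G' A)
  | gen_congr (φ) {e e'} : EdgeTerm.Equiv e e' → Equiv (gen φ e) (gen φ e')
  | prod_assoc (G H K) : Equiv (prod (prod G H) K) (prod G (prod H K))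
  | prod_comm (G H) : Equiv (prod G H) (prod H G)
  | prod_unit (G) : Equiv (prod G unit) G
  | bound_rename (G : Pretensor σ) (a c : EdgeName) :
      G.occursDir (DirEdge.out a) → G.occursDir (DirEdge.inp a) → c ∉ G.edgeNames →
      Equiv G (G.renameEdgeName a c)
  | contract_inp (G : Pretensor σ) (L : List (Pretensor σ × BoxName)) (a b : EdgeName) :
      G.occursDir (DirEdge.inp b) → ¬ G.occursDir (DirEdge.out b) →
      Equiv (prod G (nest L (idt b a))) (prod (G.renameInp b a) (nest L unit))
  | contract_out (H : Pretensor σ) (L : List (Pretensor σ × BoxName)) (a b : EdgeName) :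
      H.occursDir (DirEdge.out b) → ¬ H.occursDir (DirEdge.inp b) →
      Equiv (prod H (nest L (idt a b))) (prod (H.renameOut b a) (nest L unit))

/-- Rename the free edge names of `G` along `rn`. -/
def freeNameB (G : Pretensor σ) (a : EdgeName) : Bool :=
  (G.edgeCount (DirEdge.out a) != 0) ^^ (G.edgeCount (DirEdge.inp a) != 0)

end Pretensor

/-- Rename the free edge names of `G` along `rn`. -/
def renameFree {σ : Type} (rn : EdgeName → EdgeName) (G : Pretensor σ) : Pretensor σ :=
  G.rename (fun a => if G.freeNameB a then rn a else a) id

/-- `fr` is a freshness function for `G`: names occurring in `G` are mapped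
to names not occurring in `G`. -/
def Freshness.IsFreshFor {σ : Type} (fr : Freshness) (G : Pretensor σ) : Prop :=
  (∀ a ∈ G.edgeNames, fr.em a ∉ G.edgeNames) ∧ (∀ A ∈ G.boxNames, fr.bm A ∉ G.boxNames)

/-- The four !-box operations. -/
inductive BOp : Type
  | exp (A : BoxName) (fr : Freshness)
  | kill (A : BoxName)
  | copy (A : BoxName) (fr : Freshness)
  | drop (A : BoxName)

/-- Apply a !-box operation. -/
def BOp.app {σ : Type} : BOp → Pretensor σ → Pretensor σ
  | .exp A fr, G => G.exp A fr
  | .kill A, G => G.kill A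
  | .copy A fr, G => G.copy A fr
  | .drop A, G => G.drop A

/-- A !-box operation is applied appropriately: its freshness function (if any)
is a freshness function for the expression it is applied to. -/
def BOp.OK {σ : Type} : BOp → Pretensor σ → Prop
  | .exp _ fr, G => fr.IsFreshFor G
  | .copy _ fr, G => fr.IsFreshFor G
  | _, _ => True

def BOp.isExpKill : BOp → Prop
  | .exp _ _ => True
  | .kill _ => True
  | _ => False

def BOp.notDrop : BOp → Prop
  | .drop _ => False
  | _ => True

/-- Apply a list of !-box operations, left to right. -/
def applyOps {σ : Type} : List BOp → Pretensor σ → Pretensor σ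
  | [], G => G
  | op :: rest, G => applyOps rest (op.app G)

/-- Each operation in the list is applied appropriately. -/
def OpsOK {σ : Type} : List BOp → Pretensor σ → Prop
  | [], _ => True
  | op :: rest, G => op.OK G ∧ OpsOK rest (op.app G)

/-- An instantiation of `G`: a finite composite of (appropriately applied)
`Exp` and `Kill` operations whose result contains no !-boxes. -/
def IsInst {σ : Type} (i : List BOp) (G : Pretensor σ) : Prop :=
  (∀ op ∈ i, op.isExpKill) ∧ OpsOK i G ∧ (applyOps i G).IsConcrete

/-- Compatible boundaries: identical free edges, the same !-boxes with the same
immediate-nesting relation, and equal contexts on free edges. -/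
def Compatible {σ : Type} (G H : Pretensor σ) : Prop :=
  (∀ d, G.freeDir d ↔ H.freeDir d) ∧
  (∀ A, G.boxCount A ≠ 0 ↔ H.boxCount A ≠ 0) ∧
  (∀ A B, G.Prec A B ↔ H.Prec A B) ∧
  (∀ d, G.freeDir d → G.ctxOf d = H.ctxOf d)

/-- The set of concrete instances of the !-tensor equation `G = H`. -/
def ConcInst {σ : Type} (G H : Pretensor σ) : Set (Pretensor σ × Pretensor σ) :=
  {p | ∃ i : List BOp, IsInst i G ∧ p = (applyOps i G, applyOps i H)}

end BangTensor

namespace BangTensor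

/-! ### Auxiliary lemmas -/

theorem oeN {α} (o : Option α) : (Option.orElse o fun _ => none) = o := by cases o <;> rfl
theorem oeS {α} (a : α) (f : Unit → Option α) : (Option.orElse (some a) f) = some a := rfl
theorem oe0 {α} (f : Unit → Option α) : (Option.orElse none f) = f () := rfl

theorem orElse_eq_none {α} {o : Option α} {f : Unit → Option α} :
    (Option.orElse o f) = none ↔ o = none ∧ f () = none := by
  cases o <;> simp [oeS, oe0]

theorem DirEdge.rename_name (f : EdgeName → EdgeName) (d : DirEdge) :
    (d.rename f).name = f d.name := by cases d <;> rfl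

theorem DirEdge.rename_inj {f : EdgeName → EdgeName} (hf : Function.Injective f) :
    Function.Injective (DirEdge.rename f) := by
  intro x y h
  cases x <;> cases y <;> simp [DirEdge.rename] at h ⊢ <;> exact hf h

theorem concat_eq_append_cons {m e1 e2 : List BoxName} {C B : BoxName}
    (h : m ++ [C] = e1 ++ B :: e2) :
    (e2 = [] ∧ C = B ∧ m = e1) ∨ ∃ e2', e2 = e2' ++ [C] ∧ m = e1 ++ B :: e2' := by
  rcases List.eq_nil_or_concat e2 with rfl | ⟨e2', x, rfl⟩
  · left
    have h2 : m = e1 ∧ [C] = [B] := List.append_inj' h rfl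
    exact ⟨rfl, by simpa using h2.2, h2.1⟩
  · right
    have h' : m ++ [C] = (e1 ++ B :: e2') ++ [x] := by simpa using h
    have h2 : m = e1 ++ B :: e2' ∧ [C] = [x] := List.append_inj' h' rfl
    exact ⟨e2', by simp [← List.singleton_inj.mp h2.2], h2.1⟩

theorem filter_ne_of_not_mem {l : List BoxName} {B : BoxName} (h : B ∉ l) :
    l.filter (· ≠ B) = l :=
  List.filter_eq_self.mpr (fun a ha => by simp; rintro rfl; exact h ha)

end BangTensor
namespace BangTensor
namespace EdgeTerm

theorem ectx_eq_none_iff (d : DirEdge) (e : EdgeTerm) : e.ectx d = none ↔ e.count d = 0 := by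
  induction e with
  | eps => simp [ectx, count]
  | edge d' => by_cases h : d' = d <;> simp [ectx, count, h]
  | cw e A ih => simpa [ectx, count] using ih
  | acw e A ih => simpa [ectx, count] using ih
  | cat e f ihe ihf =>
      simp only [ectx, count, orElse_eq_none, Nat.add_eq_zero]
      rw [ihe, ihf]

theorem ectx_eq_none_of_name {d : DirEdge} {e : EdgeTerm} (h : d.name ∉ e.edgeNames) :
    e.ectx d = none := by
  induction e with
  | eps => rfl
  | edge d' =>
      simp only [edgeNames, Set.mem_singleton_iff] at h
      have : d' ≠ d := fun hh => h (hh ▸ rfl)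
      simp [ectx, this]
  | cw e A ih => simp only [edgeNames] at h; simp [ectx, ih h]
  | acw e A ih => simp only [edgeNames] at h; simp [ectx, ih h]
  | cat e f ihe ihf =>
      simp only [edgeNames, Set.mem_union, not_or] at h
      simp [ectx, ihe h.1, ihf h.2, oe0]

theorem edgeNames_rename (f : EdgeName → EdgeName) (g : BoxName → BoxName) (e : EdgeTerm) :
    (e.rename f g).edgeNames = f '' e.edgeNames := by
  induction e with
  | eps => simp [rename, edgeNames]
  | edge d => cases d <;> simp [rename, edgeNames, DirEdge.rename, DirEdge.name]
  | cw e A ih => simpa [rename, edgeNames] using ih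
  | acw e A ih => simpa [rename, edgeNames] using ih
  | cat e f' ihe ihf => simp [rename, edgeNames, ihe, ihf, Set.image_union]

theorem rename_ectx {f : EdgeName → EdgeName} (hf : Function.Injective f)
    (g : BoxName → BoxName) (d : DirEdge) (e : EdgeTerm) :
    (e.rename f g).ectx (d.rename f) = (e.ectx d).map (List.map g) := by
  induction e with
  | eps => rfl
  | edge d' =>
      by_cases h : d' = d
      · simp [rename, ectx, h]
      · have : d'.rename f ≠ d.rename f := fun hh => h (DirEdge.rename_inj hf hh)
        simp [rename, ectx, h, this]
  | cw e A ih =>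
      simp only [rename, ectx, ih, Option.map_map]
      congr 1; funext l; simp
  | acw e A ih =>
      simp only [rename, ectx, ih, Option.map_map]
      congr 1; funext l; simp
  | cat e f' ihe ihf =>
      simp only [rename, ectx, ihe, ihf]
      cases e.ectx d <;> simp [oeS, oe0]

end EdgeTerm
end BangTensor
namespace BangTensor
namespace EdgeTerm

theorem drop_ectx_none {d : DirEdge} {e : EdgeTerm} {B : BoxName} (h : e.ectx d = none) :
    (e.drop B).ectx d = none := by
  induction e with
  | eps => rfl
  | edge d' => simpa [drop, ectx] using h
  | cw e A ih =>
      simp only [ectx, Option.map_eq_none_iff] at h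
      by_cases hA : A = B <;> simp [drop, hA, h, ectx, ih h]
  | acw e A ih =>
      simp only [ectx, Option.map_eq_none_iff] at h
      by_cases hA : A = B <;> simp [drop, hA, h, ectx, ih h]
  | cat e f ihe ihf =>
      simp only [ectx, orElse_eq_none] at h
      simp [drop, ectx, orElse_eq_none, ihe h.1, ihf h.2]

theorem drop_ectx_some {d : DirEdge} {e : EdgeTerm} {B : BoxName} {l : List BoxName}
    (h : e.ectx d = some l) (hc : l.count B ≤ 1) :
    (e.drop B).ectx d = some (l.filter (· ≠ B)) := by
  induction e generalizing l with
  | eps => simp [ectx] at h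
  | edge d' =>
      by_cases hd : d' = d
      · subst hd
        simp [ectx] at h
        subst h
        simp [drop, ectx]
      · simp [ectx, hd] at h
  | cw e A ih =>
      simp only [ectx, Option.map_eq_some_iff] at h
      obtain ⟨m, hm, rfl⟩ := h
      by_cases hA : A = B
      · subst hA
        have hB : A ∉ m := by
          rw [← List.count_eq_zero]
          have hc' : (m ++ [A]).count A ≤ 1 := hc
          rw [List.count_append] at hc'
          simp at hc'
          omega
        have hdrop : ectx d (drop A (cw e A)) = ectx d e := by simp [drop]
        rw [hdrop, hm, List.filter_append, filter_ne_of_not_mem hB]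
        simp
      · have hc' : m.count B ≤ 1 := by
          simpa [List.count_append, List.count_singleton, hA, Ne.symm hA] using hc
        simp [drop, hA, ectx, ih hm hc', List.filter_append, hA, Ne.symm hA]
  | acw e A ih =>
      simp only [ectx, Option.map_eq_some_iff] at h
      obtain ⟨m, hm, rfl⟩ := h
      by_cases hA : A = B
      · subst hA
        have hB : A ∉ m := by
          rw [← List.count_eq_zero]
          have hc' : (m ++ [A]).count A ≤ 1 := hc
          rw [List.count_append] at hc'
          simp at hc'
          omega
        have hdrop : ectx d (drop A (acw e A)) = ectx d e := by simp [drop]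
        rw [hdrop, hm, List.filter_append, filter_ne_of_not_mem hB]
        simp
      · have hc' : m.count B ≤ 1 := by
          simpa [List.count_append, List.count_singleton, hA, Ne.symm hA] using hc
        simp [drop, hA, ectx, ih hm hc', List.filter_append, hA, Ne.symm hA]
  | cat e f ihe ihf =>
      simp only [ectx] at h ⊢
      cases he : e.ectx d with
      | some m =>
          rw [he, oeS] at h
          obtain rfl : m = l := by simpa using h
          simp [drop, ectx, ihe he hc, oeS]
      | none =>
          rw [he, oe0] at h
          simp [drop, ectx, drop_ectx_none he, oe0, ihf h hc]

theorem kill_ectx {d : DirEdge} {e : EdgeTerm} {B : BoxName} (hc : e.count d ≤ 1) :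
    (e.kill B).ectx d = (e.ectx d).bind (fun l => if B ∈ l then none else some l) := by
  induction e with
  | eps => rfl
  | edge d' => by_cases hd : d' = d <;> simp [kill, ectx, hd]
  | cw e A ih =>
      by_cases hA : A = B
      · subst hA; simp [kill, ectx]
        cases e.ectx d <;> simp
      · simp only [count] at hc
        simp only [kill, if_neg hA, ectx, ih hc]
        cases e.ectx d with
        | none => rfl
        | some m => by_cases hB : B ∈ m <;> simp [hB, hA, Ne.symm hA]
  | acw e A ih =>
      by_cases hA : A = B
      · subst hA; simp [kill, ectx]
        cases e.ectx d <;> simp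
      · simp only [count] at hc
        simp only [kill, if_neg hA, ectx, ih hc]
        cases e.ectx d with
        | none => rfl
        | some m => by_cases hB : B ∈ m <;> simp [hB, hA, Ne.symm hA]
  | cat e f ihe ihf =>
      simp only [count] at hc
      have hce : e.count d ≤ 1 := by omega
      have hcf : f.count d ≤ 1 := by omega
      simp only [kill, ectx, ihe hce, ihf hcf]
      cases he : e.ectx d with
      | none =>
          simp [oe0]
      | some m =>
          have hf : f.ectx d = none := by
            rw [ectx_eq_none_iff]
            have : e.count d ≠ 0 := by
              intro h0
              rw [← ectx_eq_none_iff d e] at h0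
              simp [he] at h0
            omega
          rw [hf]
          by_cases hB : B ∈ m <;> simp [hB, oeS, oe0]

end EdgeTerm
end BangTensor
namespace BangTensor
namespace EdgeTerm

theorem exp_ectx_orig {fr : Freshness} {d : DirEdge} {B : BoxName} {e : EdgeTerm}
    (hd : ∀ a ∈ e.edgeNames, fr.em a ≠ d.name) :
    (e.exp B fr).ectx d = e.ectx d := by
  induction e with
  | eps => rfl
  | edge d' => rfl
  | cw e A ih =>
      by_cases hA : A = B
      · subst hA
        have hren : (e.rename fr.em fr.bm).ectx d = none := by
          apply ectx_eq_none_of_name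
          rw [edgeNames_rename]
          rintro ⟨a, ha, hae⟩
          exact hd a ha hae
        simp [exp, ectx, hren, oeN]
      · simp [exp, hA, ectx, ih hd]
  | acw e A ih =>
      by_cases hA : A = B
      · subst hA
        have hren : (e.rename fr.em fr.bm).ectx d = none := by
          apply ectx_eq_none_of_name
          rw [edgeNames_rename]
          rintro ⟨a, ha, hae⟩
          exact hd a ha hae
        simp [exp, ectx, hren, oe0]
      · simp [exp, hA, ectx, ih hd]
  | cat e f ihe ihf =>
      have hde : ∀ a ∈ e.edgeNames, fr.em a ≠ d.name := fun a ha => hd a (Or.inl ha)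
      have hdf : ∀ a ∈ f.edgeNames, fr.em a ≠ d.name := fun a ha => hd a (Or.inr ha)
      simp [exp, ectx, ihe hde, ihf hdf]

theorem copy_ectx_orig {fr : Freshness} {d : DirEdge} {B : BoxName} {e : EdgeTerm}
    (hd : ∀ a ∈ e.edgeNames, fr.em a ≠ d.name) :
    (e.copy B fr).ectx d = e.ectx d := by
  induction e with
  | eps => rfl
  | edge d' => rfl
  | cw e A ih =>
      by_cases hA : A = B
      · subst hA
        have hren : (e.rename fr.em fr.bm).ectx d = none := by
          apply ectx_eq_none_of_name
          rw [edgeNames_rename]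
          rintro ⟨a, ha, hae⟩
          exact hd a ha hae
        simp [copy, ectx, hren, oeN]
      · simp [copy, hA, ectx, ih hd]
  | acw e A ih =>
      by_cases hA : A = B
      · subst hA
        have hren : (e.rename fr.em fr.bm).ectx d = none := by
          apply ectx_eq_none_of_name
          rw [edgeNames_rename]
          rintro ⟨a, ha, hae⟩
          exact hd a ha hae
        simp [copy, ectx, hren, oe0]
      · simp [copy, hA, ectx, ih hd]
  | cat e f ihe ihf =>
      have hde : ∀ a ∈ e.edgeNames, fr.em a ≠ d.name := fun a ha => hd a (Or.inl ha)
      have hdf : ∀ a ∈ f.edgeNames, fr.em a ≠ d.name := fun a ha => hd a (Or.inr ha)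
      simp [copy, ectx, ihe hde, ihf hdf]

theorem exp_ectx_fresh_none {fr : Freshness} {d : DirEdge} {B : BoxName} {S : Set EdgeName}
    (hS : ∀ a ∈ S, fr.em a ∉ S) {e : EdgeTerm} (he : e.edgeNames ⊆ S) (hdS : d.name ∈ S)
    (h : e.ectx d = none) :
    (e.exp B fr).ectx (d.rename fr.em) = none := by
  have hd' : (d.rename fr.em).name ∉ S := by rw [DirEdge.rename_name]; exact hS _ hdS
  induction e with
  | eps => rfl
  | edge d' =>
      have hne : d' ≠ d.rename fr.em := by
        intro hh
        exact hd' (hh ▸ he (show d'.name ∈ _ from rfl))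
      simp [exp, ectx, hne]
  | cw e A ih =>
      simp only [ectx, Option.map_eq_none_iff] at h
      have he' : e.edgeNames ⊆ S := he
      have h1 : e.ectx (d.rename fr.em) = none :=
        ectx_eq_none_of_name (fun hm => hd' (he' hm))
      by_cases hA : A = B
      · subst hA
        have h2 : (e.rename fr.em fr.bm).ectx (d.rename fr.em) = none := by
          rw [rename_ectx fr.em.injective, h]; rfl
        simp [exp, ectx, h1, h2, oe0]
      · simp [exp, hA, ectx, ih he' h]
  | acw e A ih =>
      simp only [ectx, Option.map_eq_none_iff] at h
      have he' : e.edgeNames ⊆ S := he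
      have h1 : e.ectx (d.rename fr.em) = none :=
        ectx_eq_none_of_name (fun hm => hd' (he' hm))
      by_cases hA : A = B
      · subst hA
        have h2 : (e.rename fr.em fr.bm).ectx (d.rename fr.em) = none := by
          rw [rename_ectx fr.em.injective, h]; rfl
        simp [exp, ectx, h1, h2, oe0]
      · simp [exp, hA, ectx, ih he' h]
  | cat e f ihe ihf =>
      simp only [ectx, orElse_eq_none] at h
      have hee : e.edgeNames ⊆ S := fun a ha => he (Or.inl ha)
      have hef : f.edgeNames ⊆ S := fun a ha => he (Or.inr ha)
      simp [exp, ectx, orElse_eq_none, ihe hee h.1, ihf hef h.2]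

theorem copy_ectx_fresh_none {fr : Freshness} {d : DirEdge} {B : BoxName} {S : Set EdgeName}
    (hS : ∀ a ∈ S, fr.em a ∉ S) {e : EdgeTerm} (he : e.edgeNames ⊆ S) (hdS : d.name ∈ S)
    (h : e.ectx d = none) :
    (e.copy B fr).ectx (d.rename fr.em) = none := by
  have hd' : (d.rename fr.em).name ∉ S := by rw [DirEdge.rename_name]; exact hS _ hdS
  induction e with
  | eps => rfl
  | edge d' =>
      have hne : d' ≠ d.rename fr.em := by
        intro hh
        exact hd' (hh ▸ he (show d'.name ∈ _ from rfl))
      simp [copy, ectx, hne]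
  | cw e A ih =>
      simp only [ectx, Option.map_eq_none_iff] at h
      have he' : e.edgeNames ⊆ S := he
      have h1 : e.ectx (d.rename fr.em) = none :=
        ectx_eq_none_of_name (fun hm => hd' (he' hm))
      by_cases hA : A = B
      · subst hA
        have h2 : (e.rename fr.em fr.bm).ectx (d.rename fr.em) = none := by
          rw [rename_ectx fr.em.injective, h]; rfl
        simp [copy, ectx, h1, h2, oe0]
      · simp [copy, hA, ectx, ih he' h]
  | acw e A ih =>
      simp only [ectx, Option.map_eq_none_iff] at h
      have he' : e.edgeNames ⊆ S := he
      have h1 : e.ectx (d.rename fr.em) = none :=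
        ectx_eq_none_of_name (fun hm => hd' (he' hm))
      by_cases hA : A = B
      · subst hA
        have h2 : (e.rename fr.em fr.bm).ectx (d.rename fr.em) = none := by
          rw [rename_ectx fr.em.injective, h]; rfl
        simp [copy, ectx, h1, h2, oe0]
      · simp [copy, hA, ectx, ih he' h]
  | cat e f ihe ihf =>
      simp only [ectx, orElse_eq_none] at h
      have hee : e.edgeNames ⊆ S := fun a ha => he (Or.inl ha)
      have hef : f.edgeNames ⊆ S := fun a ha => he (Or.inr ha)
      simp [copy, ectx, orElse_eq_none, ihe hee h.1, ihf hef h.2]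

end EdgeTerm
end BangTensor
namespace BangTensor
namespace EdgeTerm

theorem exp_ectx_fresh {fr : Freshness} {d : DirEdge} {B : BoxName} {S : Set EdgeName}
    (hS : ∀ a ∈ S, fr.em a ∉ S) {e : EdgeTerm} (he : e.edgeNames ⊆ S) (hdS : d.name ∈ S)
    (hc : e.count d ≤ 1) {e1 e2 : List BoxName}
    (h : e.ectx d = some (e1 ++ B :: e2)) (hB2 : B ∉ e2) :
    (e.exp B fr).ectx (d.rename fr.em) = some (e1.map fr.bm ++ e2) := by
  have hd' : (d.rename fr.em).name ∉ S := by rw [DirEdge.rename_name]; exact hS _ hdS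
  induction e generalizing e1 e2 with
  | eps => simp [ectx] at h
  | edge d' =>
      by_cases hd : d' = d
      · simp [ectx, hd] at h
      · simp [ectx, hd] at h
  | cw e A ih =>
      simp only [ectx, Option.map_eq_some_iff] at h
      obtain ⟨m, hm, hml⟩ := h
      have he' : e.edgeNames ⊆ S := he
      have h1 : e.ectx (d.rename fr.em) = none :=
        ectx_eq_none_of_name (fun hme => hd' (he' hme))
      by_cases hA : A = B
      · subst hA
        rcases concat_eq_append_cons hml with ⟨rfl, -, hme⟩ | ⟨e2', rfl, -⟩
        · have h2 : (e.rename fr.em fr.bm).ectx (d.rename fr.em)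
              = some (List.map fr.bm m) := by
            rw [rename_ectx fr.em.injective, hm]; rfl
          simp [exp, ectx, h1, h2, oe0, hme]
        · exact absurd (by simp : A ∈ e2' ++ [A]) hB2
      · rcases concat_eq_append_cons hml with ⟨-, hAB, -⟩ | ⟨e2', rfl, rfl⟩
        · exact absurd hAB hA
        · have hB2' : B ∉ e2' := fun hx => hB2 (by simp [hx])
          have := ih he' (by simpa [count] using hc) hm hB2'
          simp [exp, hA, ectx, this, List.append_assoc]
  | acw e A ih =>
      simp only [ectx, Option.map_eq_some_iff] at h
      obtain ⟨m, hm, hml⟩ := h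
      have he' : e.edgeNames ⊆ S := he
      have h1 : e.ectx (d.rename fr.em) = none :=
        ectx_eq_none_of_name (fun hme => hd' (he' hme))
      by_cases hA : A = B
      · subst hA
        rcases concat_eq_append_cons hml with ⟨rfl, -, hme⟩ | ⟨e2', rfl, -⟩
        · have h2 : (e.rename fr.em fr.bm).ectx (d.rename fr.em)
              = some (List.map fr.bm m) := by
            rw [rename_ectx fr.em.injective, hm]; rfl
          simp [exp, ectx, h2, oeS, hme]
        · exact absurd (by simp : A ∈ e2' ++ [A]) hB2
      · rcases concat_eq_append_cons hml with ⟨-, hAB, -⟩ | ⟨e2', rfl, rfl⟩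
        · exact absurd hAB hA
        · have hB2' : B ∉ e2' := fun hx => hB2 (by simp [hx])
          have := ih he' (by simpa [count] using hc) hm hB2'
          simp [exp, hA, ectx, this, List.append_assoc]
  | cat e f ihe ihf =>
      simp only [count] at hc
      have hee : e.edgeNames ⊆ S := fun a ha => he (Or.inl ha)
      have hef : f.edgeNames ⊆ S := fun a ha => he (Or.inr ha)
      simp only [ectx] at h ⊢
      cases hecx : e.ectx d with
      | some m =>
          rw [hecx, oeS] at h
          obtain rfl : m = e1 ++ B :: e2 := by simpa using h
          have := ihe hee (by omega) hecx hB2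
          simp [exp, ectx, this, oeS]
      | none =>
          rw [hecx, oe0] at h
          have h1 := exp_ectx_fresh_none hS hee hdS hecx (B := B)
          have h2 := ihf hef (by omega) h hB2
          simp [exp, ectx, h1, h2, oe0]

theorem copy_ectx_fresh {fr : Freshness} {d : DirEdge} {B : BoxName} {S : Set EdgeName}
    (hS : ∀ a ∈ S, fr.em a ∉ S) {e : EdgeTerm} (he : e.edgeNames ⊆ S) (hdS : d.name ∈ S)
    (hc : e.count d ≤ 1) {e1 e2 : List BoxName}
    (h : e.ectx d = some (e1 ++ B :: e2)) (hB2 : B ∉ e2) :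
    (e.copy B fr).ectx (d.rename fr.em) = some (e1.map fr.bm ++ fr.bm B :: e2) := by
  have hd' : (d.rename fr.em).name ∉ S := by rw [DirEdge.rename_name]; exact hS _ hdS
  induction e generalizing e1 e2 with
  | eps => simp [ectx] at h
  | edge d' =>
      by_cases hd : d' = d
      · simp [ectx, hd] at h
      · simp [ectx, hd] at h
  | cw e A ih =>
      simp only [ectx, Option.map_eq_some_iff] at h
      obtain ⟨m, hm, hml⟩ := h
      have he' : e.edgeNames ⊆ S := he
      have h1 : e.ectx (d.rename fr.em) = none :=
        ectx_eq_none_of_name (fun hme => hd' (he' hme))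
      by_cases hA : A = B
      · subst hA
        rcases concat_eq_append_cons hml with ⟨rfl, -, hme⟩ | ⟨e2', rfl, -⟩
        · have h2 : (e.rename fr.em fr.bm).ectx (d.rename fr.em)
              = some (List.map fr.bm m) := by
            rw [rename_ectx fr.em.injective, hm]; rfl
          simp [copy, ectx, h1, h2, oe0, hme]
        · exact absurd (by simp : A ∈ e2' ++ [A]) hB2
      · rcases concat_eq_append_cons hml with ⟨-, hAB, -⟩ | ⟨e2', rfl, rfl⟩
        · exact absurd hAB hA
        · have hB2' : B ∉ e2' := fun hx => hB2 (by simp [hx])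
          have := ih he' (by simpa [count] using hc) hm hB2'
          simp [copy, hA, ectx, this, List.append_assoc]
  | acw e A ih =>
      simp only [ectx, Option.map_eq_some_iff] at h
      obtain ⟨m, hm, hml⟩ := h
      have he' : e.edgeNames ⊆ S := he
      have h1 : e.ectx (d.rename fr.em) = none :=
        ectx_eq_none_of_name (fun hme => hd' (he' hme))
      by_cases hA : A = B
      · subst hA
        rcases concat_eq_append_cons hml with ⟨rfl, -, hme⟩ | ⟨e2', rfl, -⟩
        · have h2 : (e.rename fr.em fr.bm).ectx (d.rename fr.em)
              = some (List.map fr.bm m) := by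
            rw [rename_ectx fr.em.injective, hm]; rfl
          simp [copy, ectx, h2, oeS, hme]
        · exact absurd (by simp : A ∈ e2' ++ [A]) hB2
      · rcases concat_eq_append_cons hml with ⟨-, hAB, -⟩ | ⟨e2', rfl, rfl⟩
        · exact absurd hAB hA
        · have hB2' : B ∉ e2' := fun hx => hB2 (by simp [hx])
          have := ih he' (by simpa [count] using hc) hm hB2'
          simp [copy, hA, ectx, this, List.append_assoc]
  | cat e f ihe ihf =>
      simp only [count] at hc
      have hee : e.edgeNames ⊆ S := fun a ha => he (Or.inl ha)
      have hef : f.edgeNames ⊆ S := fun a ha => he (Or.inr ha)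
      simp only [ectx] at h ⊢
      cases hecx : e.ectx d with
      | some m =>
          rw [hecx, oeS] at h
          obtain rfl : m = e1 ++ B :: e2 := by simpa using h
          have := ihe hee (by omega) hecx hB2
          simp [copy, ectx, this, oeS]
      | none =>
          rw [hecx, oe0] at h
          have h1 := copy_ectx_fresh_none hS hee hdS hecx (B := B)
          have h2 := ihf hef (by omega) h hB2
          simp [copy, ectx, h1, h2, oe0]

end EdgeTerm
end BangTensor
namespace BangTensor
namespace Pretensor

variable {σ : Type}

theorem ctx2_eq_none_iff (d : DirEdge) (G : Pretensor σ) :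
    G.ctx2 d = none ↔ G.edgeCount d = 0 := by
  induction G with
  | unit => simp [ctx2, edgeCount]
  | idt a b =>
      by_cases h1 : d = DirEdge.out a <;> by_cases h2 : d = DirEdge.inp b <;>
        simp [ctx2, edgeCount, h1, h2]
  | gen φ e => simp [ctx2, edgeCount, ← EdgeTerm.ectx_eq_none_iff]
  | box G A ih => simpa [ctx2, edgeCount] using ih
  | prod G H ihG ihH =>
      simp only [ctx2, edgeCount, orElse_eq_none, Nat.add_eq_zero]
      rw [ihG, ihH]

theorem ctx2_eq_none_of_name {d : DirEdge} {G : Pretensor σ} (h : d.name ∉ G.edgeNames) :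
    G.ctx2 d = none := by
  induction G with
  | unit => rfl
  | idt a b =>
      simp only [edgeNames, Set.mem_insert_iff, Set.mem_singleton_iff, not_or] at h
      have h1 : d ≠ DirEdge.out a := fun hh => h.1 (by rw [hh]; rfl)
      have h2 : d ≠ DirEdge.inp b := fun hh => h.2 (by rw [hh]; rfl)
      simp [ctx2, h1, h2]
  | gen φ e => simp [ctx2, EdgeTerm.ectx_eq_none_of_name h]
  | box G A ih => simp [ctx2, ih h]
  | prod G H ihG ihH =>
      simp only [edgeNames, Set.mem_union, not_or] at h
      simp [ctx2, ihG h.1, ihH h.2, oe0]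

theorem edgeNames_rename (f : EdgeName → EdgeName) (g : BoxName → BoxName) (G : Pretensor σ) :
    (G.rename f g).edgeNames = f '' G.edgeNames := by
  induction G with
  | unit => simp [rename, edgeNames]
  | idt a b => simp [rename, edgeNames, Set.image_insert_eq]
  | gen φ e => simp [rename, edgeNames, EdgeTerm.edgeNames_rename]
  | box G A ih => simpa [rename, edgeNames] using ih
  | prod G H ihG ihH => simp [rename, edgeNames, ihG, ihH, Set.image_union]

theorem rename_ctx2 {f : EdgeName → EdgeName} (hf : Function.Injective f)
    (g : BoxName → BoxName) (d : DirEdge) (G : Pretensor σ) :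
    (G.rename f g).ctx2 (d.rename f) =
      (G.ctx2 d).map (fun p => (p.1.map g, p.2.map g)) := by
  induction G with
  | unit => rfl
  | idt a b =>
      have h1 : d.rename f = DirEdge.out (f a) ↔ d = DirEdge.out a := by
        constructor
        · intro hh; exact DirEdge.rename_inj hf (by simpa [DirEdge.rename] using hh)
        · rintro rfl; rfl
      have h2 : d.rename f = DirEdge.inp (f b) ↔ d = DirEdge.inp b := by
        constructor
        · intro hh; exact DirEdge.rename_inj hf (by simpa [DirEdge.rename] using hh)
        · rintro rfl; rfl
      by_cases hd : d = DirEdge.out a ∨ d = DirEdge.inp b <;>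
        simp [rename, ctx2, h1, h2, hd]
  | gen φ e =>
      simp [rename, ctx2, EdgeTerm.rename_ectx hf, Option.map_map]
      rfl
  | box G A ih =>
      simp only [rename, ctx2, ih, Option.map_map]
      congr 1
      funext p
      simp
  | prod G H ihG ihH =>
      simp only [rename, ctx2, ihG, ihH]
      cases G.ctx2 d <;> simp [oeS, oe0]

theorem drop_ctx2_none {d : DirEdge} {G : Pretensor σ} {B : BoxName} (h : G.ctx2 d = none) :
    (G.drop B).ctx2 d = none := by
  induction G with
  | unit => rfl
  | idt a b => simpa [drop, ctx2] using h
  | gen φ e =>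
      simp only [ctx2, Option.map_eq_none_iff] at h
      simp [drop, ctx2, EdgeTerm.drop_ectx_none h]
  | box G A ih =>
      simp only [ctx2, Option.map_eq_none_iff] at h
      by_cases hA : A = B <;> simp [drop, hA, h, ctx2, ih h]
  | prod G H ihG ihH =>
      simp only [ctx2, orElse_eq_none] at h
      simp [drop, ctx2, orElse_eq_none, ihG h.1, ihH h.2]

theorem drop_ctx2_some {d : DirEdge} {G : Pretensor σ} {B : BoxName}
    {ec nc : List BoxName} (h : G.ctx2 d = some (ec, nc)) (hc : (ec ++ nc).count B ≤ 1) :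
    (G.drop B).ctx2 d = some (ec.filter (· ≠ B), nc.filter (· ≠ B)) := by
  induction G generalizing ec nc with
  | unit => simp [ctx2] at h
  | idt a b =>
      by_cases hd : d = DirEdge.out a ∨ d = DirEdge.inp b
      · rw [ctx2, if_pos hd] at h
        obtain ⟨rfl, rfl⟩ := Prod.mk.inj (Option.some.inj h)
        simp [drop, ctx2, hd]
      · simp [ctx2, hd] at h
  | gen φ e =>
      simp only [ctx2, Option.map_eq_some_iff] at h
      obtain ⟨l, hl, hpair⟩ := h
      have h1 : l = ec := congrArg Prod.fst hpair
      have h2 : ([] : List BoxName) = nc := congrArg Prod.snd hpair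
      subst h1
      subst h2
      have hc' : l.count B ≤ 1 := by simpa using hc
      simp [drop, ctx2, EdgeTerm.drop_ectx_some hl hc']
  | box G A ih =>
      simp only [ctx2, Option.map_eq_some_iff] at h
      obtain ⟨⟨ec', nc'⟩, hG, hpair⟩ := h
      have h1 : ec' = ec := congrArg Prod.fst hpair
      have h2 : nc' ++ [A] = nc := congrArg Prod.snd hpair
      subst h2
      rw [← h1] at hc ⊢
      by_cases hA : A = B
      · subst hA
        have hcnt : (ec' ++ (nc' ++ [A])).count A ≤ 1 := hc
        rw [List.count_append, List.count_append] at hcnt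
        simp at hcnt
        have hBe : A ∉ ec' := by
          intro hx
          have h0 : ec'.count A ≠ 0 := by simpa [List.count_eq_zero] using hx
          omega
        have hBn : A ∉ nc' := by
          intro hx
          have h0 : nc'.count A ≠ 0 := by simpa [List.count_eq_zero] using hx
          omega
        have hfn : (nc' ++ [A]).filter (· ≠ A) = nc' := by
          rw [List.filter_append, filter_ne_of_not_mem hBn]; simp
        rw [hfn, filter_ne_of_not_mem hBe]
        simpa [drop] using hG
      · have hc' : (ec' ++ nc').count B ≤ 1 := by
          have heq : (ec' ++ (nc' ++ [A])).count B = (ec' ++ nc').count B := by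
            simp [List.count_append, List.count_singleton, hA, Ne.symm hA]
          omega
        have := ih hG hc'
        simp [drop, hA, ctx2, this, List.filter_append, hA, Ne.symm hA]
  | prod G H ihG ihH =>
      simp only [ctx2] at h ⊢
      cases hG : G.ctx2 d with
      | some p =>
          rw [hG, oeS] at h
          obtain rfl : p = (ec, nc) := by simpa using h
          simp [drop, ctx2, ihG hG hc, oeS]
      | none =>
          rw [hG, oe0] at h
          simp [drop, ctx2, drop_ctx2_none hG, oe0, ihH h hc]

end Pretensor
end BangTensor
namespace BangTensor
namespace Pretensor

variable {σ : Type}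

theorem kill_ctx2 {d : DirEdge} {G : Pretensor σ} {B : BoxName} (hc : G.edgeCount d ≤ 1) :
    (G.kill B).ctx2 d =
      (G.ctx2 d).bind (fun p => if B ∈ p.1 ++ p.2 then none else some p) := by
  induction G with
  | unit => rfl
  | idt a b =>
      by_cases hd : d = DirEdge.out a ∨ d = DirEdge.inp b <;> simp [kill, ctx2, hd]
  | gen φ e =>
      have hce : e.count d ≤ 1 := hc
      simp only [kill, ctx2, EdgeTerm.kill_ectx hce]
      cases e.ectx d with
      | none => rfl
      | some l => by_cases hB : B ∈ l <;> simp [hB]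
  | box G A ih =>
      have hcG : G.edgeCount d ≤ 1 := hc
      by_cases hA : A = B
      · subst hA
        simp only [kill, if_pos rfl]
        cases hG : G.ctx2 d with
        | none => simp [ctx2, hG]
        | some p => simp [ctx2, hG]
      · simp only [kill, if_neg hA, ctx2, ih hcG]
        cases hG : G.ctx2 d with
        | none => rfl
        | some p =>
            have hBA : ¬ B = A := fun hh => hA hh.symm
            by_cases hB : B ∈ p.1 ++ p.2
            · rw [List.mem_append] at hB
              rcases hB with hB | hB <;> simp [hB]
            · rw [List.mem_append, not_or] at hB
              simp [hB.1, hB.2, hBA]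
  | prod G H ihG ihH =>
      simp only [edgeCount] at hc
      have hcG : G.edgeCount d ≤ 1 := by omega
      have hcH : H.edgeCount d ≤ 1 := by omega
      simp only [kill, ctx2, ihG hcG, ihH hcH]
      cases hG : G.ctx2 d with
      | none => simp [oe0]
      | some p =>
          have hH : H.ctx2 d = none := by
            rw [ctx2_eq_none_iff]
            have : G.edgeCount d ≠ 0 := by
              intro h0
              rw [← ctx2_eq_none_iff d G] at h0
              simp [hG] at h0
            omega
          rw [hH]
          by_cases hB : B ∈ p.1 ++ p.2 <;> simp [hB, oeS, oe0]

theorem exp_ctx2_orig {fr : Freshness} {d : DirEdge} {B : BoxName} {G : Pretensor σ}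
    (hd : ∀ a ∈ G.edgeNames, fr.em a ≠ d.name) :
    (G.exp B fr).ctx2 d = G.ctx2 d := by
  induction G with
  | unit => rfl
  | idt a b => rfl
  | gen φ e => simp [exp, ctx2, EdgeTerm.exp_ectx_orig hd]
  | box G A ih =>
      by_cases hA : A = B
      · subst hA
        have hren : (G.rename fr.em fr.bm).ctx2 d = none := by
          apply ctx2_eq_none_of_name
          rw [edgeNames_rename]
          rintro ⟨a, ha, hae⟩
          exact hd a ha hae
        simp [exp, ctx2, hren, oeN]
      · simp [exp, hA, ctx2, ih hd]
  | prod G H ihG ihH =>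
      have hdG : ∀ a ∈ G.edgeNames, fr.em a ≠ d.name := fun a ha => hd a (Or.inl ha)
      have hdH : ∀ a ∈ H.edgeNames, fr.em a ≠ d.name := fun a ha => hd a (Or.inr ha)
      simp [exp, ctx2, ihG hdG, ihH hdH]

theorem copy_ctx2_orig {fr : Freshness} {d : DirEdge} {B : BoxName} {G : Pretensor σ}
    (hd : ∀ a ∈ G.edgeNames, fr.em a ≠ d.name) :
    (G.copy B fr).ctx2 d = G.ctx2 d := by
  induction G with
  | unit => rfl
  | idt a b => rfl
  | gen φ e => simp [copy, ctx2, EdgeTerm.copy_ectx_orig hd]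
  | box G A ih =>
      by_cases hA : A = B
      · subst hA
        have hren : (G.rename fr.em fr.bm).ctx2 d = none := by
          apply ctx2_eq_none_of_name
          rw [edgeNames_rename]
          rintro ⟨a, ha, hae⟩
          exact hd a ha hae
        simp [copy, ctx2, hren, oeN]
      · simp [copy, hA, ctx2, ih hd]
  | prod G H ihG ihH =>
      have hdG : ∀ a ∈ G.edgeNames, fr.em a ≠ d.name := fun a ha => hd a (Or.inl ha)
      have hdH : ∀ a ∈ H.edgeNames, fr.em a ≠ d.name := fun a ha => hd a (Or.inr ha)
      simp [copy, ctx2, ihG hdG, ihH hdH]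

theorem exp_ctx2_fresh_none {fr : Freshness} {d : DirEdge} {B : BoxName} {S : Set EdgeName}
    (hS : ∀ a ∈ S, fr.em a ∉ S) {G : Pretensor σ} (he : G.edgeNames ⊆ S) (hdS : d.name ∈ S)
    (h : G.ctx2 d = none) :
    (G.exp B fr).ctx2 (d.rename fr.em) = none := by
  have hd' : (d.rename fr.em).name ∉ S := by rw [DirEdge.rename_name]; exact hS _ hdS
  induction G with
  | unit => rfl
  | idt a b =>
      exact ctx2_eq_none_of_name (fun hm => hd' (he hm))
  | gen φ e =>
      simp only [ctx2, Option.map_eq_none_iff] at h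
      simp [exp, ctx2, EdgeTerm.exp_ectx_fresh_none hS he hdS h (B := B)]
  | box G A ih =>
      simp only [ctx2, Option.map_eq_none_iff] at h
      have he' : G.edgeNames ⊆ S := he
      have h1 : G.ctx2 (d.rename fr.em) = none :=
        ctx2_eq_none_of_name (fun hm => hd' (he' hm))
      by_cases hA : A = B
      · subst hA
        have h2 : (G.rename fr.em fr.bm).ctx2 (d.rename fr.em) = none := by
          rw [rename_ctx2 fr.em.injective, h]; rfl
        simp [exp, ctx2, h1, h2, oe0]
      · simp [exp, hA, ctx2, ih he' h]
  | prod G H ihG ihH =>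
      simp only [ctx2, orElse_eq_none] at h
      have heG : G.edgeNames ⊆ S := fun a ha => he (Or.inl ha)
      have heH : H.edgeNames ⊆ S := fun a ha => he (Or.inr ha)
      simp [exp, ctx2, orElse_eq_none, ihG heG h.1, ihH heH h.2]

theorem copy_ctx2_fresh_none {fr : Freshness} {d : DirEdge} {B : BoxName} {S : Set EdgeName}
    (hS : ∀ a ∈ S, fr.em a ∉ S) {G : Pretensor σ} (he : G.edgeNames ⊆ S) (hdS : d.name ∈ S)
    (h : G.ctx2 d = none) :
    (G.copy B fr).ctx2 (d.rename fr.em) = none := by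
  have hd' : (d.rename fr.em).name ∉ S := by rw [DirEdge.rename_name]; exact hS _ hdS
  induction G with
  | unit => rfl
  | idt a b =>
      exact ctx2_eq_none_of_name (fun hm => hd' (he hm))
  | gen φ e =>
      simp only [ctx2, Option.map_eq_none_iff] at h
      simp [copy, ctx2, EdgeTerm.copy_ectx_fresh_none hS he hdS h (B := B)]
  | box G A ih =>
      simp only [ctx2, Option.map_eq_none_iff] at h
      have he' : G.edgeNames ⊆ S := he
      have h1 : G.ctx2 (d.rename fr.em) = none :=
        ctx2_eq_none_of_name (fun hm => hd' (he' hm))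
      by_cases hA : A = B
      · subst hA
        have h2 : (G.rename fr.em fr.bm).ctx2 (d.rename fr.em) = none := by
          rw [rename_ctx2 fr.em.injective, h]; rfl
        simp [copy, ctx2, h1, h2, oe0]
      · simp [copy, hA, ctx2, ih he' h]
  | prod G H ihG ihH =>
      simp only [ctx2, orElse_eq_none] at h
      have heG : G.edgeNames ⊆ S := fun a ha => he (Or.inl ha)
      have heH : H.edgeNames ⊆ S := fun a ha => he (Or.inr ha)
      simp [copy, ctx2, orElse_eq_none, ihG heG h.1, ihH heH h.2]

end Pretensor
end BangTensor
namespace BangTensor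
namespace Pretensor

variable {σ : Type}

theorem exp_ctx2_ec {fr : Freshness} {d : DirEdge} {B : BoxName} {S : Set EdgeName}
    (hS : ∀ a ∈ S, fr.em a ∉ S) {G : Pretensor σ} (he : G.edgeNames ⊆ S) (hdS : d.name ∈ S)
    (hc : G.edgeCount d ≤ 1) {e1 e2 nc : List BoxName}
    (h : G.ctx2 d = some (e1 ++ B :: e2, nc)) (hB2 : B ∉ e2) (hBn : B ∉ nc) :
    (G.exp B fr).ctx2 (d.rename fr.em) = some (e1.map fr.bm ++ e2, nc) := by
  have hd' : (d.rename fr.em).name ∉ S := by rw [DirEdge.rename_name]; exact hS _ hdS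
  induction G generalizing nc with
  | unit => simp [ctx2] at h
  | idt a b =>
      by_cases hd : d = DirEdge.out a ∨ d = DirEdge.inp b
      · rw [ctx2, if_pos hd] at h
        have h1 : ([] : List BoxName) = e1 ++ B :: e2 :=
          congrArg Prod.fst (Option.some.inj h)
        simp at h1
      · simp [ctx2, hd] at h
  | gen φ e =>
      simp only [ctx2, Option.map_eq_some_iff] at h
      obtain ⟨l, hl, hpair⟩ := h
      have h1 : l = e1 ++ B :: e2 := congrArg Prod.fst hpair
      have h2 : ([] : List BoxName) = nc := congrArg Prod.snd hpair
      subst h1; subst h2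
      simp [exp, ctx2, EdgeTerm.exp_ectx_fresh hS he hdS hc hl hB2]
  | box G A ih =>
      simp only [ctx2, Option.map_eq_some_iff] at h
      obtain ⟨⟨ec', nc'⟩, hG, hpair⟩ := h
      have h1 : ec' = e1 ++ B :: e2 := congrArg Prod.fst hpair
      have h2 : nc' ++ [A] = nc := congrArg Prod.snd hpair
      subst h1; subst h2
      have hBn' : B ∉ nc' := fun hx => hBn (by simp [hx])
      have hA : ¬ A = B := fun hh => hBn (by simp [hh])
      have hrec := ih he hc hG hBn'
      simp [exp, hA, ctx2, hrec]
  | prod G H ihG ihH =>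
      simp only [edgeCount] at hc
      have heG : G.edgeNames ⊆ S := fun a ha => he (Or.inl ha)
      have heH : H.edgeNames ⊆ S := fun a ha => he (Or.inr ha)
      simp only [ctx2] at h ⊢
      cases hG : G.ctx2 d with
      | some p =>
          rw [hG, oeS] at h
          obtain rfl : p = (e1 ++ B :: e2, nc) := by simpa using h
          have := ihG heG (by omega) hG hBn
          simp [exp, ctx2, this, oeS]
      | none =>
          rw [hG, oe0] at h
          have h1 := exp_ctx2_fresh_none hS heG hdS hG (B := B)
          have h2 := ihH heH (by omega) h hBn
          simp [exp, ctx2, h1, h2, oe0]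

theorem copy_ctx2_ec {fr : Freshness} {d : DirEdge} {B : BoxName} {S : Set EdgeName}
    (hS : ∀ a ∈ S, fr.em a ∉ S) {G : Pretensor σ} (he : G.edgeNames ⊆ S) (hdS : d.name ∈ S)
    (hc : G.edgeCount d ≤ 1) {e1 e2 nc : List BoxName}
    (h : G.ctx2 d = some (e1 ++ B :: e2, nc)) (hB2 : B ∉ e2) (hBn : B ∉ nc) :
    (G.copy B fr).ctx2 (d.rename fr.em) = some (e1.map fr.bm ++ fr.bm B :: e2, nc) := by
  have hd' : (d.rename fr.em).name ∉ S := by rw [DirEdge.rename_name]; exact hS _ hdS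
  induction G generalizing nc with
  | unit => simp [ctx2] at h
  | idt a b =>
      by_cases hd : d = DirEdge.out a ∨ d = DirEdge.inp b
      · rw [ctx2, if_pos hd] at h
        have h1 : ([] : List BoxName) = e1 ++ B :: e2 :=
          congrArg Prod.fst (Option.some.inj h)
        simp at h1
      · simp [ctx2, hd] at h
  | gen φ e =>
      simp only [ctx2, Option.map_eq_some_iff] at h
      obtain ⟨l, hl, hpair⟩ := h
      have h1 : l = e1 ++ B :: e2 := congrArg Prod.fst hpair
      have h2 : ([] : List BoxName) = nc := congrArg Prod.snd hpair
      subst h1; subst h2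
      simp [copy, ctx2, EdgeTerm.copy_ectx_fresh hS he hdS hc hl hB2]
  | box G A ih =>
      simp only [ctx2, Option.map_eq_some_iff] at h
      obtain ⟨⟨ec', nc'⟩, hG, hpair⟩ := h
      have h1 : ec' = e1 ++ B :: e2 := congrArg Prod.fst hpair
      have h2 : nc' ++ [A] = nc := congrArg Prod.snd hpair
      subst h1; subst h2
      have hBn' : B ∉ nc' := fun hx => hBn (by simp [hx])
      have hA : ¬ A = B := fun hh => hBn (by simp [hh])
      have hrec := ih he hc hG hBn'
      simp [copy, hA, ctx2, hrec]
  | prod G H ihG ihH =>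
      simp only [edgeCount] at hc
      have heG : G.edgeNames ⊆ S := fun a ha => he (Or.inl ha)
      have heH : H.edgeNames ⊆ S := fun a ha => he (Or.inr ha)
      simp only [ctx2] at h ⊢
      cases hG : G.ctx2 d with
      | some p =>
          rw [hG, oeS] at h
          obtain rfl : p = (e1 ++ B :: e2, nc) := by simpa using h
          have := ihG heG (by omega) hG hBn
          simp [copy, ctx2, this, oeS]
      | none =>
          rw [hG, oe0] at h
          have h1 := copy_ctx2_fresh_none hS heG hdS hG (B := B)
          have h2 := ihH heH (by omega) h hBn
          simp [copy, ctx2, h1, h2, oe0]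

theorem exp_ctx2_nc {fr : Freshness} {d : DirEdge} {B : BoxName} {S : Set EdgeName}
    (hS : ∀ a ∈ S, fr.em a ∉ S) {G : Pretensor σ} (he : G.edgeNames ⊆ S) (hdS : d.name ∈ S)
    (hc : G.edgeCount d ≤ 1) {ec n1 n2 : List BoxName}
    (h : G.ctx2 d = some (ec, n1 ++ B :: n2)) (hB2 : B ∉ n2) (hBe : B ∉ ec) :
    (G.exp B fr).ctx2 (d.rename fr.em) = some (ec.map fr.bm, n1.map fr.bm ++ n2) := by
  have hd' : (d.rename fr.em).name ∉ S := by rw [DirEdge.rename_name]; exact hS _ hdS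
  induction G generalizing n1 n2 with
  | unit => simp [ctx2] at h
  | idt a b =>
      by_cases hd : d = DirEdge.out a ∨ d = DirEdge.inp b
      · rw [ctx2, if_pos hd] at h
        have h1 : ([] : List BoxName) = n1 ++ B :: n2 :=
          congrArg Prod.snd (Option.some.inj h)
        simp at h1
      · simp [ctx2, hd] at h
  | gen φ e =>
      simp only [ctx2, Option.map_eq_some_iff] at h
      obtain ⟨l, hl, hpair⟩ := h
      have h2 : ([] : List BoxName) = n1 ++ B :: n2 := congrArg Prod.snd hpair
      simp at h2
  | box G A ih =>
      simp only [ctx2, Option.map_eq_some_iff] at h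
      obtain ⟨⟨ec', nc'⟩, hG, hpair⟩ := h
      have h1 : ec' = ec := congrArg Prod.fst hpair
      have h2 : nc' ++ [A] = n1 ++ B :: n2 := congrArg Prod.snd hpair
      subst h1
      rcases concat_eq_append_cons h2 with ⟨rfl, hAB, hme⟩ | ⟨n2', rfl, hm⟩
      · subst hAB
        have hbox : G.ctx2 (d.rename fr.em) = none :=
          ctx2_eq_none_of_name (fun hm' => hd' (he hm'))
        have hren : (G.rename fr.em fr.bm).ctx2 (d.rename fr.em)
            = some (ec'.map fr.bm, nc'.map fr.bm) := by
          rw [rename_ctx2 fr.em.injective, hG]; rfl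
        simp [exp, ctx2, hbox, hren, oe0, hme]
      · have hA : ¬ A = B := by
          rintro rfl
          exact hB2 (by simp)
        have hB2' : B ∉ n2' := fun hx => hB2 (by simp [hx])
        rw [hm] at hG
        have hrec := ih he hc hG hB2'
        simp [exp, hA, ctx2, hrec, List.append_assoc]
  | prod G H ihG ihH =>
      simp only [edgeCount] at hc
      have heG : G.edgeNames ⊆ S := fun a ha => he (Or.inl ha)
      have heH : H.edgeNames ⊆ S := fun a ha => he (Or.inr ha)
      simp only [ctx2] at h ⊢
      cases hG : G.ctx2 d with
      | some p =>
          rw [hG, oeS] at h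
          obtain rfl : p = (ec, n1 ++ B :: n2) := by simpa using h
          have := ihG heG (by omega) hG hB2
          simp [exp, ctx2, this, oeS]
      | none =>
          rw [hG, oe0] at h
          have h1 := exp_ctx2_fresh_none hS heG hdS hG (B := B)
          have h2 := ihH heH (by omega) h hB2
          simp [exp, ctx2, h1, h2, oe0]

theorem copy_ctx2_nc {fr : Freshness} {d : DirEdge} {B : BoxName} {S : Set EdgeName}
    (hS : ∀ a ∈ S, fr.em a ∉ S) {G : Pretensor σ} (he : G.edgeNames ⊆ S) (hdS : d.name ∈ S)
    (hc : G.edgeCount d ≤ 1) {ec n1 n2 : List BoxName}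
    (h : G.ctx2 d = some (ec, n1 ++ B :: n2)) (hB2 : B ∉ n2) (hBe : B ∉ ec) :
    (G.copy B fr).ctx2 (d.rename fr.em)
      = some (ec.map fr.bm, n1.map fr.bm ++ fr.bm B :: n2) := by
  have hd' : (d.rename fr.em).name ∉ S := by rw [DirEdge.rename_name]; exact hS _ hdS
  induction G generalizing n1 n2 with
  | unit => simp [ctx2] at h
  | idt a b =>
      by_cases hd : d = DirEdge.out a ∨ d = DirEdge.inp b
      · rw [ctx2, if_pos hd] at h
        have h1 : ([] : List BoxName) = n1 ++ B :: n2 :=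
          congrArg Prod.snd (Option.some.inj h)
        simp at h1
      · simp [ctx2, hd] at h
  | gen φ e =>
      simp only [ctx2, Option.map_eq_some_iff] at h
      obtain ⟨l, hl, hpair⟩ := h
      have h2 : ([] : List BoxName) = n1 ++ B :: n2 := congrArg Prod.snd hpair
      simp at h2
  | box G A ih =>
      simp only [ctx2, Option.map_eq_some_iff] at h
      obtain ⟨⟨ec', nc'⟩, hG, hpair⟩ := h
      have h1 : ec' = ec := congrArg Prod.fst hpair
      have h2 : nc' ++ [A] = n1 ++ B :: n2 := congrArg Prod.snd hpair
      subst h1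
      rcases concat_eq_append_cons h2 with ⟨rfl, hAB, hme⟩ | ⟨n2', rfl, hm⟩
      · subst hAB
        have hbox : G.ctx2 (d.rename fr.em) = none :=
          ctx2_eq_none_of_name (fun hm' => hd' (he hm'))
        have hren : (G.rename fr.em fr.bm).ctx2 (d.rename fr.em)
            = some (ec'.map fr.bm, nc'.map fr.bm) := by
          rw [rename_ctx2 fr.em.injective, hG]; rfl
        simp [copy, ctx2, hbox, hren, oe0, hme]
      · have hA : ¬ A = B := by
          rintro rfl
          exact hB2 (by simp)
        have hB2' : B ∉ n2' := fun hx => hB2 (by simp [hx])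
        rw [hm] at hG
        have hrec := ih he hc hG hB2'
        simp [copy, hA, ctx2, hrec, List.append_assoc]
  | prod G H ihG ihH =>
      simp only [edgeCount] at hc
      have heG : G.edgeNames ⊆ S := fun a ha => he (Or.inl ha)
      have heH : H.edgeNames ⊆ S := fun a ha => he (Or.inr ha)
      simp only [ctx2] at h ⊢
      cases hG : G.ctx2 d with
      | some p =>
          rw [hG, oeS] at h
          obtain rfl : p = (ec, n1 ++ B :: n2) := by simpa using h
          have := ihG heG (by omega) hG hB2
          simp [copy, ctx2, this, oeS]
      | none =>
          rw [hG, oe0] at h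
          have h1 := copy_ctx2_fresh_none hS heG hdS hG (B := B)
          have h2 := ihH heH (by omega) h hB2
          simp [copy, ctx2, h1, h2, oe0]

end Pretensor
end BangTensor
namespace BangTensor
namespace Pretensor

variable {σ : Type}

theorem boxCount_ne_zero_of_boxCtx {G : Pretensor σ} {A : BoxName} {l : List BoxName}
    (h : G.boxCtx A = some l) : G.boxCount A ≠ 0 := by
  induction G generalizing l with
  | unit => simp [boxCtx] at h
  | idt a b => simp [boxCtx] at h
  | gen φ e => simp [boxCtx] at h
  | box G C ih =>
      by_cases hC : C = A
      · simp [boxCount, hC]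
      · rw [boxCtx, if_neg hC] at h
        simp only [Option.map_eq_some_iff] at h
        obtain ⟨m, hm, -⟩ := h
        have := ih hm
        simp [boxCount, hC]
        omega
  | prod G H ihG ihH =>
      rw [boxCtx] at h
      cases hG : G.boxCtx A with
      | some m =>
          have := ihG hG
          simp [boxCount]
          omega
      | none =>
          rw [hG, oe0] at h
          have := ihH h
          simp [boxCount]
          omega

theorem boxCtx_step {G : Pretensor σ} (hF2 : ∀ X, G.boxCount X ≤ 1) {A B : BoxName}
    {l : List BoxName} (h : G.boxCtx A = some (B :: l)) : G.boxCtx B = some l := by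
  induction G generalizing l with
  | unit => simp [boxCtx] at h
  | idt a b => simp [boxCtx] at h
  | gen φ e => simp [boxCtx] at h
  | box G C ih =>
      have hF2' : ∀ X, G.boxCount X ≤ 1 := by
        intro X
        have := hF2 X
        simp [boxCount] at this
        omega
      by_cases hC : C = A
      · rw [boxCtx, if_pos hC] at h
        simp at h
      · rw [boxCtx, if_neg hC] at h
        simp only [Option.map_eq_some_iff] at h
        obtain ⟨m, hm, hml⟩ := h
        cases m with
        | nil =>
            simp at hml
            obtain ⟨rfl, rfl⟩ := hml
            simp [boxCtx]
        | cons B' m' =>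
            obtain ⟨hB', hml2⟩ := List.cons.inj hml
            rw [hB'] at hm
            have hGB := ih hF2' hm
            have hCB : ¬ C = B := by
              intro hh
              have h1 := boxCount_ne_zero_of_boxCtx hGB
              have h2 := hF2 B
              simp [boxCount, hh] at h2
              omega
            rw [boxCtx, if_neg hCB, hGB]
            simpa using hml2
  | prod G H ihG ihH =>
      have hF2G : ∀ X, G.boxCount X ≤ 1 := by
        intro X
        have := hF2 X
        simp [boxCount] at this
        omega
      have hF2H : ∀ X, H.boxCount X ≤ 1 := by
        intro X
        have := hF2 X
        simp [boxCount] at this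
        omega
      rw [boxCtx] at h ⊢
      cases hG : G.boxCtx A with
      | some m =>
          rw [hG, oeS] at h
          obtain rfl : m = B :: l := by simpa using h
          have := ihG hF2G hG
          rw [this, oeS]
      | none =>
          rw [hG, oe0] at h
          have hHB := ihH hF2H h
          cases hGB : G.boxCtx B with
          | none => rw [oe0, hHB]
          | some m' =>
              exfalso
              have h1 := boxCount_ne_zero_of_boxCtx hGB
              have h2 := boxCount_ne_zero_of_boxCtx hHB
              have h3 := hF2 B
              simp [boxCount] at h3
              omega

/-- Depth measure used to show edge contexts have no duplicates. -/
noncomputable def boxDepth (G : Pretensor σ) (X : BoxName) : ℕ :=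
  ((G.boxCtx X).map List.length).getD 0

theorem prec_boxDepth {G : Pretensor σ} (hF2 : ∀ X, G.boxCount X ≤ 1) {A B : BoxName}
    (h : G.Prec A B) : G.boxDepth B < G.boxDepth A := by
  obtain ⟨l, hl⟩ := h
  have hB := boxCtx_step hF2 hl
  simp [boxDepth, hl, hB]

theorem nodup_of_chain'_lt {α : Type*} (f : α → ℕ) {r : α → α → Prop}
    (hr : ∀ a b, r a b → f b < f a) {l : List α} (h : List.Chain' r l) : l.Nodup := by
  have h2 : List.Chain' (fun a b => f b < f a) l :=
    List.IsChain.imp (fun a b hab => hr a b hab) h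
  haveI : IsTrans α (fun a b => f b < f a) := ⟨fun a b c h1 h2 => lt_trans h2 h1⟩
  have h3 := List.isChain_iff_pairwise.mp h2
  exact h3.imp (fun {a b} hab => fun he => by subst he; exact lt_irrefl _ hab)

theorem nc_nodup {G : Pretensor σ} (hF2 : ∀ X, G.boxCount X ≤ 1) {d : DirEdge}
    {ec nc : List BoxName} (h : G.ctx2 d = some (ec, nc)) :
    nc.Nodup ∧ ∀ B ∈ nc, G.boxCount B ≠ 0 := by
  induction G generalizing ec nc with
  | unit => simp [ctx2] at h
  | idt a b =>
      by_cases hd : d = DirEdge.out a ∨ d = DirEdge.inp b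
      · rw [ctx2, if_pos hd] at h
        obtain ⟨-, rfl⟩ := Prod.mk.inj (Option.some.inj h)
        simp
      · simp [ctx2, hd] at h
  | gen φ e =>
      simp only [ctx2, Option.map_eq_some_iff] at h
      obtain ⟨l, -, hpair⟩ := h
      have h2 : ([] : List BoxName) = nc := congrArg Prod.snd hpair
      subst h2
      simp
  | box G A ih =>
      have hF2' : ∀ X, G.boxCount X ≤ 1 := by
        intro X
        have := hF2 X
        simp [boxCount] at this
        omega
      simp only [ctx2, Option.map_eq_some_iff] at h
      obtain ⟨⟨ec', nc'⟩, hG, hpair⟩ := h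
      have h2 : nc' ++ [A] = nc := congrArg Prod.snd hpair
      subst h2
      obtain ⟨hnd, hmem⟩ := ih hF2' hG
      constructor
      · rw [List.nodup_append]
        refine ⟨hnd, by simp, ?_⟩
        intro x hx
        simp only [List.mem_singleton]
        intro _ hb; rw [hb]; intro hxa
        subst hxa
        have h1 := hmem x hx
        have h2 := hF2 x
        simp [boxCount] at h2
        omega
      · intro B hB
        rw [List.mem_append] at hB
        rcases hB with hB | hB
        · have := hmem B hB
          simp [boxCount]
          omega
        · simp only [List.mem_singleton] at hB
          subst hB
          simp [boxCount]
  | prod G H ihG ihH =>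
      have hF2G : ∀ X, G.boxCount X ≤ 1 := by
        intro X
        have := hF2 X
        simp [boxCount] at this
        omega
      have hF2H : ∀ X, H.boxCount X ≤ 1 := by
        intro X
        have := hF2 X
        simp [boxCount] at this
        omega
      rw [ctx2] at h
      cases hG : G.ctx2 d with
      | some p =>
          rw [hG, oeS] at h
          obtain rfl : p = (ec, nc) := by simpa using h
          obtain ⟨hnd, hmem⟩ := ihG hF2G hG
          refine ⟨hnd, fun B hB => ?_⟩
          have := hmem B hB
          simp [boxCount]
          omega
      | none =>
          rw [hG, oe0] at h
          obtain ⟨hnd, hmem⟩ := ihH hF2H h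
          refine ⟨hnd, fun B hB => ?_⟩
          have := hmem B hB
          simp [boxCount]
          omega

end Pretensor
end BangTensor

namespace BangTensor

/-- The table of contexts affected by !-box operations: given
a directed edge `d` of `G` with edge context `ec` and node context `nc`,
`Drop`, `Exp` and `Copy` on a !-box in the edge or node context of `d` affect
the context of `d` (resp. of its fresh copy `fr(d)`) as listed; edges remaining
after a `Kill` have unchanged contexts, and edges of `G` surviving the other
operations unchanged retain their original contexts. -/
theorem context_table {σ : Type} (G : Pretensor σ) (hG : Pretensor.IsTensorExpr G)
    (d : DirEdge) (ec nc : List BoxName) (h : G.ctx2 d = some (ec, nc)) :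
    -- Drop at a box in the edge context
    (∀ (e1 : List BoxName) (B : BoxName) (e2 : List BoxName), ec = e1 ++ B :: e2 →
      (G.drop B).ctx2 d = some (e1 ++ e2, nc)) ∧
    -- Drop at a box in the node context
    (∀ (n1 : List BoxName) (B : BoxName) (n2 : List BoxName), nc = n1 ++ B :: n2 →
      (G.drop B).ctx2 d = some (ec, n1 ++ n2)) ∧
    -- Exp at a box in the edge context; `fr(d)` is the fresh copy of `d`
    (∀ (e1 : List BoxName) (B : BoxName) (e2 : List BoxName) (fr : Freshness),
      ec = e1 ++ B :: e2 → fr.IsFreshFor G →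
      (G.exp B fr).ctx2 (d.rename fr.em) = some (e1.map fr.bm ++ e2, nc)) ∧
    -- Exp at a box in the node context
    (∀ (n1 : List BoxName) (B : BoxName) (n2 : List BoxName) (fr : Freshness),
      nc = n1 ++ B :: n2 → fr.IsFreshFor G →
      (G.exp B fr).ctx2 (d.rename fr.em) = some (ec.map fr.bm, n1.map fr.bm ++ n2)) ∧
    -- Copy at a box in the edge context
    (∀ (e1 : List BoxName) (B : BoxName) (e2 : List BoxName) (fr : Freshness),
      ec = e1 ++ B :: e2 → fr.IsFreshFor G →
      (G.copy B fr).ctx2 (d.rename fr.em) = some (e1.map fr.bm ++ fr.bm B :: e2, nc)) ∧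
    -- Copy at a box in the node context
    (∀ (n1 : List BoxName) (B : BoxName) (n2 : List BoxName) (fr : Freshness),
      nc = n1 ++ B :: n2 → fr.IsFreshFor G →
      (G.copy B fr).ctx2 (d.rename fr.em) = some (ec.map fr.bm, n1.map fr.bm ++ fr.bm B :: n2)) ∧
    -- Edges remaining after a Kill have unchanged contexts
    (∀ (B : BoxName) (c : List BoxName × List BoxName),
      (G.kill B).ctx2 d = some c → (G.kill B).ctx2 d = G.ctx2 d) ∧
    -- Surviving original edges retain their contexts
    (∀ B : BoxName, B ∉ ec → B ∉ nc → (G.drop B).ctx2 d = some (ec, nc)) ∧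
    (∀ (B : BoxName) (fr : Freshness), fr.IsFreshFor G →
      (G.exp B fr).ctx2 d = some (ec, nc)) ∧
    (∀ (B : BoxName) (fr : Freshness), fr.IsFreshFor G →
      (G.copy B fr).ctx2 d = some (ec, nc)) := by
  obtain ⟨hF1, hF2, hC1, hC2, hC3⟩ := hG
  have hdn : d.name ∈ G.edgeNames := by
    by_contra hn
    rw [Pretensor.ctx2_eq_none_of_name hn] at h
    simp at h
  have hdisj : ec.Disjoint nc := hC1 d ec nc h
  have hecN : ec.Nodup :=
    Pretensor.nodup_of_chain'_lt G.boxDepth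
      (fun a b hab => Pretensor.prec_boxDepth hF2 hab) (hC2 d ec nc h).2
  have hncN : nc.Nodup := (Pretensor.nc_nodup hF2 h).1
  refine ⟨?_, ?_, ?_, ?_, ?_, ?_, ?_, ?_, ?_, ?_⟩
  -- Drop in edge context
  · intro e1 B e2 hec
    subst hec
    rw [List.nodup_append] at hecN
    have hB2 : B ∉ e2 := by
      have := hecN.2.1
      rw [List.nodup_cons] at this
      exact this.1
    have hB1 : B ∉ e1 := fun hx => hecN.2.2 B hx B List.mem_cons_self rfl
    have hBn : B ∉ nc := fun hx => hdisj (by simp) hx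
    have hc : ((e1 ++ B :: e2) ++ nc).count B ≤ 1 := by
      rw [List.count_append, List.count_append, List.count_cons,
        List.count_eq_zero.mpr hB1, List.count_eq_zero.mpr hB2, List.count_eq_zero.mpr hBn]
      simp
    have hfe : (e1 ++ B :: e2).filter (· ≠ B) = e1 ++ e2 := by
      rw [List.filter_append, filter_ne_of_not_mem hB1, List.filter_cons]
      simp only [decide_not]
      simp
      exact fun a ha hab => hB2 (hab ▸ ha)
    rw [Pretensor.drop_ctx2_some h hc, hfe, filter_ne_of_not_mem hBn]
  -- Drop in node context
  · intro n1 B n2 hnc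
    subst hnc
    rw [List.nodup_append] at hncN
    have hB2 : B ∉ n2 := by
      have := hncN.2.1
      rw [List.nodup_cons] at this
      exact this.1
    have hB1 : B ∉ n1 := fun hx => hncN.2.2 B hx B List.mem_cons_self rfl
    have hBe : B ∉ ec := fun hx => hdisj hx (by simp)
    have hc : (ec ++ (n1 ++ B :: n2)).count B ≤ 1 := by
      rw [List.count_append, List.count_append, List.count_cons,
        List.count_eq_zero.mpr hB1, List.count_eq_zero.mpr hB2, List.count_eq_zero.mpr hBe]
      simp
    have hfn : (n1 ++ B :: n2).filter (· ≠ B) = n1 ++ n2 := by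
      rw [List.filter_append, filter_ne_of_not_mem hB1, List.filter_cons]
      simp only [decide_not]
      simp
      exact fun a ha hab => hB2 (hab ▸ ha)
    rw [Pretensor.drop_ctx2_some h hc, hfn, filter_ne_of_not_mem hBe]
  -- Exp in edge context
  · intro e1 B e2 fr hec hfr
    subst hec
    rw [List.nodup_append] at hecN
    have hB2 : B ∉ e2 := by
      have := hecN.2.1
      rw [List.nodup_cons] at this
      exact this.1
    have hBn : B ∉ nc := fun hx => hdisj (by simp) hx
    exact Pretensor.exp_ctx2_ec hfr.1 (Set.Subset.refl _) hdn (hF1 d) h hB2 hBn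
  -- Exp in node context
  · intro n1 B n2 fr hnc hfr
    subst hnc
    rw [List.nodup_append] at hncN
    have hB2 : B ∉ n2 := by
      have := hncN.2.1
      rw [List.nodup_cons] at this
      exact this.1
    have hBe : B ∉ ec := fun hx => hdisj hx (by simp)
    exact Pretensor.exp_ctx2_nc hfr.1 (Set.Subset.refl _) hdn (hF1 d) h hB2 hBe
  -- Copy in edge context
  · intro e1 B e2 fr hec hfr
    subst hec
    rw [List.nodup_append] at hecN
    have hB2 : B ∉ e2 := by
      have := hecN.2.1
      rw [List.nodup_cons] at this
      exact this.1
    have hBn : B ∉ nc := fun hx => hdisj (by simp) hx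
    exact Pretensor.copy_ctx2_ec hfr.1 (Set.Subset.refl _) hdn (hF1 d) h hB2 hBn
  -- Copy in node context
  · intro n1 B n2 fr hnc hfr
    subst hnc
    rw [List.nodup_append] at hncN
    have hB2 : B ∉ n2 := by
      have := hncN.2.1
      rw [List.nodup_cons] at this
      exact this.1
    have hBe : B ∉ ec := fun hx => hdisj hx (by simp)
    exact Pretensor.copy_ctx2_nc hfr.1 (Set.Subset.refl _) hdn (hF1 d) h hB2 hBe
  -- Kill
  · intro B c hkc
    rw [Pretensor.kill_ctx2 (hF1 d), h] at hkc ⊢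
    simp only [Option.bind_some] at hkc ⊢
    by_cases hB : B ∈ (ec, nc).1 ++ (ec, nc).2
    · rw [if_pos hB] at hkc
      exact absurd hkc (by simp)
    · rw [if_neg hB]
  -- Drop, surviving edge
  · intro B hBe hBn
    have hc : (ec ++ nc).count B ≤ 1 := by
      rw [List.count_append, List.count_eq_zero.mpr hBe, List.count_eq_zero.mpr hBn]
      simp
    rw [Pretensor.drop_ctx2_some h hc, filter_ne_of_not_mem hBe, filter_ne_of_not_mem hBn]
  -- Exp, surviving edge
  · intro B fr hfr
    have hd : ∀ a ∈ G.edgeNames, fr.em a ≠ d.name :=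
      fun a ha hae => hfr.1 a ha (hae ▸ hdn)
    rw [Pretensor.exp_ctx2_orig hd, h]
  -- Copy, surviving edge
  · intro B fr hfr
    have hd : ∀ a ∈ G.edgeNames, fr.em a ≠ d.name :=
      fun a ha hae => hfr.1 a ha (hae ▸ hdn)
    rw [Pretensor.copy_ctx2_orig hd, h]

end BangTensor
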